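/- (Pivot quality for the combined repeated-step algorithm with groups of 4, lower medians then upper medians.) Let j ∈ ℕ and k = 2j + 1, and let S be a finite set of 16k distinct real numbers. Suppose S is partitioned into 4k pairwise disjoint groups of 4 elements each; let mᵢ (1 ≤ i ≤ 4k) be the lower median (2nd smallest element) of the i-th group, and suppose the set M = {m₁, …, m_{4k}} is partitioned into k pairwise disjoint groups of 4 elements each, with M' the set of the k upper medians (3rd smallest elements) of these groups. Let m be the median ((j+1)-th smallest element) of M'. Then |{x ∈ S : x ≤ m}| ≥ 6(j+1) and |{x ∈ S : x ≥ m}| ≥ 6(j+1). In particular, at least 3·|S|/16 elements of S are ≤ m and at least 3·|S|/16 are ≥ m. -/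

import Mathlib

/-- The `j`-th smallest element (0-indexed) of a finite set of reals. -/
noncomputable def kthSmallest (s : Finset ℝ) (j : ℕ) : ℝ :=
  (s.sort (· ≤ ·)).getD j 0

lemma card_filter_eq_countP (s : Finset ℝ) (p : ℝ → Prop) [DecidablePred p] :
    (s.filter p).card = (s.sort (· ≤ ·)).countP (fun x => decide (p x)) := by
  have h : ((s.sort (· ≤ ·) : List ℝ) : Multiset ℝ) = s.val := Finset.sort_eq s _
  rw [Finset.card, Finset.filter_val, ← Multiset.countP_eq_card_filter, ← h]
  exact Multiset.coe_countP _ _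

lemma take_countP (l : List ℝ) (hl : l.Pairwise (· ≤ ·)) (t : ℕ) (ht : t < l.length) :
    t + 1 ≤ l.countP (fun x => decide (x ≤ l.getD t 0)) := by
  have key : (l.take (t + 1)).countP (fun x => decide (x ≤ l.getD t 0)) = t + 1 := by
    rw [List.countP_eq_length.2, List.length_take]
    · omega
    · intro a ha
      rw [List.mem_take_iff_getElem] at ha
      obtain ⟨i, hi, rfl⟩ := ha
      have hi' : i < l.length := lt_of_lt_of_le hi (min_le_right _ _)
      rw [List.getD_eq_getElem l 0 ht]
      simp only [decide_eq_true_eq]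
      exact hl.rel_get_of_le (show (⟨i, hi'⟩ : Fin l.length) ≤ ⟨t, ht⟩ by
        simp [Fin.le_def]; omega)
  calc t + 1 = _ := key.symm
    _ ≤ _ := (List.take_sublist _ _).countP_le

lemma drop_countP (l : List ℝ) (hl : l.Pairwise (· ≤ ·)) (t : ℕ) :
    l.length - t ≤ l.countP (fun x => decide (l.getD t 0 ≤ x)) := by
  rcases le_or_gt l.length t with h | h
  · omega
  have key : l.length - t ≤ (l.drop t).countP (fun x => decide (l.getD t 0 ≤ x)) := by
    rw [List.countP_eq_length.2, List.length_drop]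
    intro a ha
    rw [List.mem_drop_iff_getElem] at ha
    obtain ⟨i, hi, rfl⟩ := ha
    rw [List.getD_eq_getElem l 0 h]
    simp only [decide_eq_true_eq]
    exact hl.rel_get_of_le (show (⟨t, h⟩ : Fin l.length) ≤ ⟨t + i, by omega⟩ by
      simp [Fin.le_def])
  calc l.length - t ≤ _ := key
    _ ≤ _ := (List.drop_sublist _ _).countP_le

lemma kthSmallest_mem (s : Finset ℝ) (t : ℕ) (ht : t < s.card) : kthSmallest s t ∈ s := by
  have hlen : (s.sort (· ≤ ·)).length = s.card := Finset.length_sort _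
  rw [kthSmallest, List.getD_eq_getElem _ _ (by omega)]
  exact (Finset.mem_sort _).1 (List.getElem_mem _)

lemma card_filter_le_kth (s : Finset ℝ) (t : ℕ) (ht : t < s.card) (m : ℝ)
    (hm : kthSmallest s t ≤ m) :
    t + 1 ≤ (s.filter (fun x => x ≤ m)).card := by
  rw [card_filter_eq_countP]
  have hlen : (s.sort (· ≤ ·)).length = s.card := Finset.length_sort _
  calc t + 1 ≤ (s.sort (· ≤ ·)).countP (fun x => decide (x ≤ kthSmallest s t)) :=
        take_countP _ (Finset.pairwise_sort _ _) t (by omega)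
    _ ≤ _ := List.countP_mono_left (fun x _ hx => by
        simp only [decide_eq_true_eq] at *; exact le_trans hx hm)

lemma card_filter_ge_kth (s : Finset ℝ) (t : ℕ) (m : ℝ)
    (hm : m ≤ kthSmallest s t) :
    s.card - t ≤ (s.filter (fun x => m ≤ x)).card := by
  rw [card_filter_eq_countP]
  have hlen : (s.sort (· ≤ ·)).length = s.card := Finset.length_sort _
  calc s.card - t ≤ (s.sort (· ≤ ·)).countP (fun x => decide (kthSmallest s t ≤ x)) := by
        rw [← hlen]; exact drop_countP _ (Finset.pairwise_sort _ _) t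
    _ ≤ _ := List.countP_mono_left (fun x _ hx => by
        simp only [decide_eq_true_eq] at *; exact le_trans hm hx)

lemma lift_count {n : ℕ} (F : Fin n → Finset ℝ)
    (hdisj : ∀ i i' : Fin n, i ≠ i' → Disjoint (F i) (F i'))
    (t : ℕ) (ht : ∀ i, t < (F i).card)
    (T : Finset ℝ) (hT : Finset.univ.biUnion F = T)
    (N : Finset ℝ) (hN : N = Finset.image (fun i => kthSmallest (F i) t) Finset.univ)
    (p : ℝ → Prop) [DecidablePred p] (c : ℕ)
    (hp : ∀ i, p (kthSmallest (F i) t) → c ≤ ((F i).filter p).card) :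
    c * (N.filter p).card ≤ (T.filter p).card := by
  subst hT hN
  rw [Finset.filter_biUnion,
    Finset.card_biUnion (fun i _ i' _ h => Finset.disjoint_filter_filter (hdisj i i' h)),
    Finset.filter_image]
  have hinj : Function.Injective (fun i => kthSmallest (F i) t) := by
    intro i i' h
    by_contra hne
    have h1 := kthSmallest_mem (F i) t (ht i)
    have h2 := kthSmallest_mem (F i') t (ht i')
    simp only at h
    rw [h] at h1
    exact (Finset.disjoint_left.1 (hdisj i i' hne)) h1 h2
  rw [Finset.card_image_of_injective _ hinj]
  calc c * (Finset.univ.filter (fun i => p (kthSmallest (F i) t))).card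
      = ∑ _i ∈ Finset.univ.filter (fun i => p (kthSmallest (F i) t)), c := by
        rw [Finset.sum_const, smul_eq_mul, mul_comm]
    _ ≤ ∑ i ∈ Finset.univ.filter (fun i => p (kthSmallest (F i) t)),
          ((F i).filter p).card :=
        Finset.sum_le_sum (fun i hi => hp i (Finset.mem_filter.1 hi).2)
    _ ≤ ∑ i : Fin n, ((F i).filter p).card :=
        Finset.sum_le_sum_of_subset (Finset.filter_subset _ _)

lemma card_image_kth {n : ℕ} (F : Fin n → Finset ℝ)
    (hdisj : ∀ i i' : Fin n, i ≠ i' → Disjoint (F i) (F i'))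
    (t : ℕ) (ht : ∀ i, t < (F i).card) :
    (Finset.image (fun i => kthSmallest (F i) t) Finset.univ).card = n := by
  have hinj : Function.Injective (fun i => kthSmallest (F i) t) := by
    intro i i' h
    by_contra hne
    have h1 := kthSmallest_mem (F i) t (ht i)
    have h2 := kthSmallest_mem (F i') t (ht i')
    simp only at h
    rw [h] at h1
    exact (Finset.disjoint_left.1 (hdisj i i' hne)) h1 h2
  rw [Finset.card_image_of_injective _ hinj, Finset.card_univ, Fintype.card_fin]

/-- Pivot quality for the combined repeated-step algorithm with groups of 4
(lower medians, then upper medians): the median `m` of `M'` is `≤` at least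
`6(j+1)` elements of `S` and `≥` at least `6(j+1)` elements of `S`. -/
theorem pivot_quality_repeated4 (j : ℕ) (k : ℕ) (hk : k = 2 * j + 1)
    (S : Finset ℝ) (hS : S.card = 16 * k)
    (G : Fin (4 * k) → Finset ℝ)
    (hGdisj : ∀ i i' : Fin (4 * k), i ≠ i' → Disjoint (G i) (G i'))
    (hGunion : Finset.univ.biUnion G = S)
    (hGcard : ∀ i, (G i).card = 4)
    (M : Finset ℝ) (hM : M = Finset.image (fun i => kthSmallest (G i) 1) Finset.univ)
    (H : Fin k → Finset ℝ)
    (hHdisj : ∀ i i' : Fin k, i ≠ i' → Disjoint (H i) (H i'))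
    (hHunion : Finset.univ.biUnion H = M)
    (hHcard : ∀ i, (H i).card = 4)
    (M' : Finset ℝ) (hM' : M' = Finset.image (fun i => kthSmallest (H i) 2) Finset.univ)
    (m : ℝ) (hm : m = kthSmallest M' j) :
    6 * (j + 1) ≤ (S.filter (fun x => x ≤ m)).card ∧
    6 * (j + 1) ≤ (S.filter (fun x => m ≤ x)).card := by
  have hG1 : ∀ i, (1 : ℕ) < (G i).card := fun i => by rw [hGcard]; omega
  have hH2 : ∀ i, (2 : ℕ) < (H i).card := fun i => by rw [hHcard]; omega
  have hM'card : M'.card = k := by rw [hM']; exact card_image_kth H hHdisj 2 hH2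
  have hjk : j < k := by omega
  -- base counts on M'
  have b1 : j + 1 ≤ (M'.filter (fun x => x ≤ m)).card :=
    card_filter_le_kth M' j (by omega) m (le_of_eq hm.symm)
  have b2 : j + 1 ≤ (M'.filter (fun x => m ≤ x)).card := by
    have := card_filter_ge_kth M' j m (le_of_eq hm)
    omega
  -- lift through H
  have l1 : 3 * (M'.filter (fun x => x ≤ m)).card ≤ (M.filter (fun x => x ≤ m)).card := by
    refine lift_count H hHdisj 2 hH2 M hHunion M' hM' _ 3 ?_
    intro i hi
    have := card_filter_le_kth (H i) 2 (hH2 i) m hi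
    omega
  have l2 : 2 * (M'.filter (fun x => m ≤ x)).card ≤ (M.filter (fun x => m ≤ x)).card := by
    refine lift_count H hHdisj 2 hH2 M hHunion M' hM' _ 2 ?_
    intro i hi
    have := card_filter_ge_kth (H i) 2 m hi
    rw [hHcard] at this
    omega
  -- lift through G
  have l3 : 2 * (M.filter (fun x => x ≤ m)).card ≤ (S.filter (fun x => x ≤ m)).card := by
    refine lift_count G hGdisj 1 hG1 S hGunion M hM _ 2 ?_
    intro i hi
    have := card_filter_le_kth (G i) 1 (hG1 i) m hi
    omega
  have l4 : 3 * (M.filter (fun x => m ≤ x)).card ≤ (S.filter (fun x => m ≤ x)).card := by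
    refine lift_count G hGdisj 1 hG1 S hGunion M hM _ 3 ?_
    intro i hi
    have := card_filter_ge_kth (G i) 1 m hi
    rw [hGcard] at this
    omega
  constructor
  · omega
  · omega
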